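/- Let e be a finite set of r ≥ 3 nodes and let m : 2^e → ℝ be defined by m(S) = m_{|S|} for reals m_0 = 0, m_1, …, m_{r−1}, m_r with m_r = m_{r−2}. If m is submodular, then the penalties satisfy: (i) 2m_1 ≥ m_2; (ii) 2m_j ≥ m_{j−1} + m_{j+1} for all j with 2 ≤ j ≤ r−3; and (iii) m_j ≤ m_{j+1} for all j with 1 ≤ j ≤ r−2. -/

import Mathlib

/-- if the function `m(S) = m_{|S|}` on subsets of an `r`-node set
(`r ≥ 3`), with `m 0 = 0` and `m r = m_{r-2}`, is submodular, then
`2m₁ ≥ m₂`, `2m_j ≥ m_{j-1} + m_{j+1}` for `2 ≤ j ≤ r-3`, and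
`m_j ≤ m_{j+1}` for `1 ≤ j ≤ r-2`. -/
theorem stmt_16 {α : Type*} [Fintype α] [DecidableEq α] (r : ℕ) (hr : 3 ≤ r)
    (hcard : Fintype.card α = r)
    (m : ℕ → ℝ) (hm0 : m 0 = 0) (hmr : m r = m (r - 2))
    (f : Finset α → ℝ) (hf : ∀ S : Finset α, f S = m S.card)
    (hsub : ∀ A B : Finset α, f (A ∩ B) + f (A ∪ B) ≤ f A + f B) :
    2 * m 1 ≥ m 2 ∧
    (∀ j : ℕ, 2 ≤ j → j ≤ r - 3 → 2 * m j ≥ m (j - 1) + m (j + 1)) ∧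
    (∀ j : ℕ, 1 ≤ j → j ≤ r - 2 → m j ≤ m (j + 1)) := by
  -- key concavity inequality
  have key : ∀ i : ℕ, i + 2 ≤ r → m i + m (i + 2) ≤ 2 * m (i + 1) := by
    intro i hi
    obtain ⟨C, -, hC⟩ := Finset.exists_subset_card_eq (s := (Finset.univ : Finset α)) (n := i + 2)
      (by rw [Finset.card_univ, hcard]; exact hi)
    have h2 : 1 < C.card := by omega
    obtain ⟨x, hx, y, hy, hxy⟩ := Finset.one_lt_card.mp h2
    set A := C.erase x with hA
    set B := C.erase y with hB
    have hAB : A ∩ B = (C.erase x).erase y := by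
      ext z
      simp [hA, hB, Finset.mem_inter, Finset.mem_erase]
      tauto
    have hU : A ∪ B = C := by
      ext z
      simp only [hA, hB, Finset.mem_union, Finset.mem_erase]
      constructor
      · tauto
      · intro hz
        by_cases hzx : z = x
        · exact Or.inr ⟨by rw [hzx]; exact hxy, hz⟩
        · exact Or.inl ⟨hzx, hz⟩
    have cA : A.card = i + 1 := by
      rw [hA, Finset.card_erase_of_mem hx, hC]
      omega
    have cB : B.card = i + 1 := by
      rw [hB, Finset.card_erase_of_mem hy, hC]
      omega
    have cI : (A ∩ B).card = i := by
      rw [hAB, Finset.card_erase_of_mem (Finset.mem_erase.mpr ⟨fun h => hxy h.symm, hy⟩),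
        Finset.card_erase_of_mem hx, hC]
      omega
    have := hsub A B
    rw [hf, hf, hf, hf, cA, cB, cI, hU, hC] at this
    linarith
  -- write r = t + 3
  obtain ⟨t, rfl⟩ : ∃ t, r = t + 3 := ⟨r - 3, by omega⟩
  -- difference sequence is antitone
  have dec : ∀ j : ℕ, j + 1 ≤ t + 3 → ∀ i ≤ j, m (j + 1) - m j ≤ m (i + 1) - m i := by
    intro j
    induction j with
    | zero =>
      intro _ i hi
      obtain rfl : i = 0 := Nat.le_zero.mp hi
      exact le_rfl
    | succ n ih =>
      intro hj i hi
      have h1 : m (n + 2) - m (n + 1) ≤ m (n + 1) - m n := by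
        have := key n (by omega); linarith
      rcases Nat.lt_or_ge i (n + 1) with h | h
      · have := ih (by omega) i (by omega)
        linarith
      · have : i = n + 1 := by omega
        subst this; linarith
  have hmr' : m (t + 3) = m (t + 1) := by
    have h32 : t + 3 - 2 = t + 1 := by omega
    rw [h32] at hmr; exact hmr
  have hlast : 0 ≤ m (t + 2) - m (t + 1) := by
    have h1 := key (t + 1) (by omega)
    have : m (t + 3) - m (t + 2) ≤ m (t + 2) - m (t + 1) := by linarith
    linarith [hmr' ▸ this]
  refine ⟨?_, ?_, ?_⟩
  · have := key 0 (by omega); rw [hm0] at this; linarith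
  · intro j h2 h3
    obtain ⟨k, rfl⟩ : ∃ k, j = k + 2 := ⟨j - 2, by omega⟩
    have h := key (k + 1) (by omega)
    have h1 : k + 2 - 1 = k + 1 := rfl
    rw [h1]
    linarith
  · intro j h1 h2
    have hd := dec (t + 1) (by omega) j (by omega)
    linarith
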